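/- Given any continuous path α : [0,1] → P(S) (with the weak topology) and ε > 0, there exists a polygonal path β : [0,1] → P(S) with vertices at finitely supported measures such that sup_{t ∈ [0,1]} q(α(t), β(t)) < ε. -/

import Mathlib

open MeasureTheory Filter Topology Set Metric
open scoped ENNReal NNReal

/-- The Ky Fan distance between two `S`-valued random variables on `(Ω, P)`:
`inf {ε > 0 : P{ω : d(X ω, Y ω) ≥ ε} ≤ ε}`. -/
noncomputable def kyFanDist {Ω S : Type*} [MeasurableSpace Ω] [PseudoMetricSpace S]
    (P : Measure Ω) (X Y : Ω → S) : ℝ :=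
  sInf {ε : ℝ | 0 < ε ∧ (P {ω | ε ≤ dist (X ω) (Y ω)}).toReal ≤ ε}

/-- A measure is nonatomic if every set of positive measure contains a measurable
subset of strictly smaller positive measure. -/
def Nonatomic {Ω : Type*} [MeasurableSpace Ω] (P : Measure Ω) : Prop :=
  ∀ A : Set Ω, MeasurableSet A → 0 < P A →
    ∃ B ⊆ A, MeasurableSet B ∧ 0 < P B ∧ P B < P A

/-- A finitely supported measure: a finite convex combination of Dirac measures. -/
def FinitelySupported {S : Type*} [MeasurableSpace S] (μ : Measure S) : Prop :=
  ∃ (n : ℕ) (c : Fin n → ℝ≥0∞) (a : Fin n → S),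
    (∑ i, c i) = 1 ∧ μ = ∑ i, c i • Measure.dirac (a i)

/-- Continuity of a path of random variables with respect to the Ky Fan metric
(equivalently, the topology of convergence in probability). -/
def KyFanContinuousOn {Ω S : Type*} [MeasurableSpace Ω] [PseudoMetricSpace S]
    (P : Measure Ω) (γ : ℝ → Ω → S) (A : Set ℝ) : Prop :=
  ∀ t ∈ A, ∀ ε > 0, ∃ δ > 0, ∀ s ∈ A, |s - t| < δ → kyFanDist P (γ s) (γ t) < ε

/-- Continuity of a path of measures with respect to the Lévy–Prokhorov metric. -/
def LPContinuousOn {S : Type*} [MeasurableSpace S] [PseudoMetricSpace S]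
    (α : ℝ → Measure S) (A : Set ℝ) : Prop :=
  ∀ t ∈ A, ∀ ε > 0, ∃ δ > 0, ∀ s ∈ A, |s - t| < δ → levyProkhorovDist (α s) (α t) < ε

/-- A polygonal path in the space of measures with vertices in `V`: there is a partition
`0 = t₀ < t₁ < ⋯ < t_{n+1} = 1` and vertices `μᵢ ∈ V` such that on `[tᵢ, tᵢ₊₁]` the path
is the affine interpolation of `μᵢ` and `μᵢ₊₁`. -/
def IsPolygonalWithVertices {S : Type*} [MeasurableSpace S] (β : ℝ → Measure S)
    (V : Set (Measure S)) : Prop :=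
  ∃ (n : ℕ) (t : Fin (n + 2) → ℝ) (μ : Fin (n + 2) → Measure S),
    StrictMono t ∧ t 0 = 0 ∧ t (Fin.last (n + 1)) = 1 ∧ (∀ i, μ i ∈ V) ∧
    ∀ (i : Fin (n + 1)), ∀ s ∈ Set.Icc (t i.castSucc) (t i.succ),
      β s = ENNReal.ofReal ((t i.succ - s) / (t i.succ - t i.castSucc)) • μ i.castSucc
        + ENNReal.ofReal ((s - t i.castSucc) / (t i.succ - t i.castSucc)) • μ i.succ

/-- Every continuous path in `P(S)` can be uniformly `ε`-approximated (in Lévy–Prokhorov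
distance) by a polygonal path with vertices at finitely supported probability measures. -/
lemma lp_nonneg {S : Type*} [MeasurableSpace S] [PseudoEMetricSpace S] (μ ν : Measure S) :
    0 ≤ levyProkhorovDist μ ν := ENNReal.toReal_nonneg

lemma mix_isProb {S : Type*} [MeasurableSpace S] (μ₀ μ₁ : Measure S)
    [IsProbabilityMeasure μ₀] [IsProbabilityMeasure μ₁] {a b : ℝ} (ha : 0 ≤ a) (hb : 0 ≤ b) (hab : a + b = 1) :
    IsProbabilityMeasure (ENNReal.ofReal a • μ₀ + ENNReal.ofReal b • μ₁) := by
  constructor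
  simp [Measure.add_apply, Measure.smul_apply, smul_eq_mul,
    ← ENNReal.ofReal_add ha hb, hab]

lemma lp_mix_le {S : Type*} [MeasurableSpace S] [MetricSpace S] [OpensMeasurableSpace S]
    (ν μ₀ μ₁ : Measure S) [IsProbabilityMeasure ν] [IsProbabilityMeasure μ₀]
    [IsProbabilityMeasure μ₁] {a b : ℝ} (ha : 0 ≤ a) (hb : 0 ≤ b) (hab : a + b = 1) :
    levyProkhorovDist ν (ENNReal.ofReal a • μ₀ + ENNReal.ofReal b • μ₁)
      ≤ max (levyProkhorovDist ν μ₀) (levyProkhorovDist ν μ₁) := by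
  haveI := mix_isProb μ₀ μ₁ ha hb hab
  apply levyProkhorovDist_le_of_forall_le
  · exact le_max_of_le_left (lp_nonneg _ _)
  intro ε B hε hB
  have hε0 : 0 < ε := lt_of_le_of_lt (le_max_of_le_left (lp_nonneg ν μ₀)) hε
  have key : ∀ μ : Measure S, IsProbabilityMeasure μ → levyProkhorovDist ν μ ≤ max (levyProkhorovDist ν μ₀) (levyProkhorovDist ν μ₁) →
      ν B ≤ μ (thickening ε B) + ENNReal.ofReal ε := by
    intro μ hμ hle
    have hlt : levyProkhorovEDist ν μ < ENNReal.ofReal ε := by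
      rw [← ENNReal.ofReal_toReal (levyProkhorovEDist_ne_top ν μ)]
      exact ENNReal.ofReal_lt_ofReal_iff hε0 |>.mpr (lt_of_le_of_lt hle hε)
    have := left_measure_le_of_levyProkhorovEDist_lt hlt hB
    rwa [ENNReal.toReal_ofReal hε0.le] at this
  have h0 := key μ₀ inferInstance (le_max_left _ _)
  have h1 := key μ₁ inferInstance (le_max_right _ _)
  calc ν B = (ENNReal.ofReal a + ENNReal.ofReal b) * ν B := by
        rw [← ENNReal.ofReal_add ha hb, hab]; simp
    _ = ENNReal.ofReal a * ν B + ENNReal.ofReal b * ν B := by ring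
    _ ≤ ENNReal.ofReal a * (μ₀ (thickening ε B) + ENNReal.ofReal ε)
        + ENNReal.ofReal b * (μ₁ (thickening ε B) + ENNReal.ofReal ε) := by
        gcongr
    _ = (ENNReal.ofReal a • μ₀ + ENNReal.ofReal b • μ₁) (thickening ε B)
        + (ENNReal.ofReal a + ENNReal.ofReal b) * ENNReal.ofReal ε := by
        simp [Measure.add_apply, Measure.smul_apply, smul_eq_mul]; ring
    _ = _ := by rw [← ENNReal.ofReal_add ha hb, hab]; simp

lemma dense_finSupp {S : Type*} [MeasurableSpace S] [MetricSpace S] [BorelSpace S]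
    [TopologicalSpace.SeparableSpace S]
    (μ : Measure S) [IsProbabilityMeasure μ] {δ : ℝ} (hδ : 0 < δ) :
    ∃ ν : Measure S, FinitelySupported ν ∧ IsProbabilityMeasure ν ∧
      levyProkhorovDist μ ν < δ := by
  classical
  have hne : Nonempty S := by
    by_contra h
    rw [not_nonempty_iff] at h
    have : μ univ = 1 := measure_univ
    simp [Set.univ_eq_empty_iff.mpr h] at this
  obtain ⟨u, hu⟩ := TopologicalSpace.exists_dense_seq S
  set r : ℝ := δ / 2 with hr
  have hr0 : 0 < r := by positivity
  -- the increasing union of balls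
  set E : ℕ → Set S := fun N => ⋃ j ≤ N, ball (u j) r with hE
  have hEmono : Monotone E := by
    intro N M hNM
    exact iUnion_mono fun j => iUnion_mono' fun hj => ⟨le_trans hj hNM, subset_rfl⟩
  have hEuniv : ⋃ N, E N = univ := by
    apply eq_univ_of_forall
    intro x
    obtain ⟨j, hj⟩ := hu.exists_dist_lt x hr0
    exact mem_iUnion.mpr ⟨j, mem_iUnion₂.mpr ⟨j, le_refl j, mem_ball.mpr hj⟩⟩
  have hEmeas : ∀ N, MeasurableSet (E N) := fun N =>
    MeasurableSet.biUnion (to_countable _) fun j _ => measurableSet_ball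
  have htend : Tendsto (fun N => μ (E N)) atTop (𝓝 (μ (⋃ N, E N))) :=
    tendsto_measure_iUnion_atTop hEmono
  rw [hEuniv, measure_univ] at htend
  -- choose N with μ (E N)ᶜ ≤ ofReal r
  have : ∀ᶠ N in atTop, 1 - ENNReal.ofReal r < μ (E N) := by
    apply htend.eventually_const_lt
    exact ENNReal.sub_lt_self ENNReal.one_ne_top one_ne_zero (ENNReal.ofReal_pos.mpr hr0).ne'
  obtain ⟨N, hN⟩ := this.exists
  have hcompl : μ (E N)ᶜ ≤ ENNReal.ofReal r := by
    rw [measure_compl (hEmeas N) (measure_ne_top μ _), measure_univ]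
    rw [tsub_le_iff_right]
    calc (1:ℝ≥0∞) ≤ (1 - ENNReal.ofReal r) + ENNReal.ofReal r := le_tsub_add
      _ ≤ ENNReal.ofReal r + μ (E N) := by rw [add_comm]; exact add_le_add_right hN.le _
  -- disjointified pieces
  set A : Fin (N + 1) → Set S := fun j => ball (u j) r \ ⋃ i < (j : ℕ), ball (u i) r with hA
  have hAmeas : ∀ j, MeasurableSet (A j) := fun j =>
    measurableSet_ball.diff (MeasurableSet.biUnion (to_countable _) fun i _ => measurableSet_ball)
  have hAball : ∀ j, A j ⊆ ball (u j) r := fun j => diff_subset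
  have hAdisj : Pairwise (Function.onFun Disjoint A) := by
    intro j j' hjj'
    rcases lt_or_gt_of_ne hjj' with h | h
    · apply Set.disjoint_left.mpr
      intro x hxj hxj'
      exact hxj'.2 (mem_iUnion₂.mpr ⟨j, h, hxj.1⟩)
    · apply Set.disjoint_right.mpr
      intro x hxj' hxj
      exact hxj.2 (mem_iUnion₂.mpr ⟨j', h, hxj'.1⟩)
  have hAunion : ⋃ j, A j = E N := by
    apply Set.Subset.antisymm
    · refine iUnion_subset fun j => (hAball j).trans ?_
      intro x hx
      exact mem_iUnion₂.mpr ⟨(j : ℕ), Nat.lt_succ_iff.mp j.isLt, hx⟩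
    · intro x hx
      rw [hE] at hx
      simp only [mem_iUnion] at hx
      obtain ⟨j, hjN, hxj⟩ := hx
      have hex : ∃ i, x ∈ ball (u i) r := ⟨j, hxj⟩
      set i0 := Nat.find hex with hi0
      have hi0N : i0 ≤ N := le_trans (Nat.find_le hxj) hjN
      refine mem_iUnion.mpr ⟨⟨i0, Nat.lt_succ_of_le hi0N⟩, Nat.find_spec hex, ?_⟩
      intro hmem
      simp only [mem_iUnion] at hmem
      obtain ⟨i, hi, hxi⟩ := hmem
      exact absurd (Nat.find_le hxi) (not_le.mpr hi)
  -- the finitely supported approximation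
  set c : Fin (N + 1) → ℝ≥0∞ := fun j => μ (A j) + (if j = 0 then 1 - μ (E N) else 0) with hc
  have hsumA : ∑ j, μ (A j) = μ (E N) := by
    rw [← hAunion, measure_iUnion hAdisj hAmeas, tsum_fintype]
  have hsumc : ∑ j, c j = 1 := by
    rw [hc]
    rw [Finset.sum_add_distrib, hsumA, Finset.sum_ite_eq' Finset.univ (0 : Fin (N+1))]
    simp only [Finset.mem_univ, if_true]
    exact add_tsub_cancel_of_le prob_le_one
  set ν : Measure S := ∑ j, c j • Measure.dirac (u j) with hν
  have hνapp : ∀ T : Set S, MeasurableSet T → ν T = ∑ j, c j * Measure.dirac (u ↑j) T := by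
    intro T hT
    rw [hν, Measure.finset_sum_apply]
    simp [Measure.smul_apply, smul_eq_mul]
  have hνprob : IsProbabilityMeasure ν := by
    constructor
    rw [hνapp univ MeasurableSet.univ]
    simp [hsumc]
  refine ⟨ν, ⟨N + 1, c, fun j => u j, hsumc, hν⟩, hνprob, ?_⟩
  have hbound : levyProkhorovDist μ ν ≤ r := by
    apply levyProkhorovDist_le_of_forall_le μ ν hr0.le
    intro ε B hrε hB
    set T := thickening ε B with hT
    have hTmeas : MeasurableSet T := isOpen_thickening.measurableSet
    have step1 : μ B ≤ μ (B ∩ E N) + ENNReal.ofReal ε := by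
      calc μ B ≤ μ (B ∩ E N) + μ (B \ E N) := measure_le_inter_add_diff μ B (E N)
        _ ≤ μ (B ∩ E N) + ENNReal.ofReal ε := by
            gcongr
            calc μ (B \ E N) ≤ μ (E N)ᶜ := measure_mono fun x hx => hx.2
              _ ≤ ENNReal.ofReal r := hcompl
              _ ≤ ENNReal.ofReal ε := ENNReal.ofReal_le_ofReal hrε.le
    have step2 : μ (B ∩ E N) ≤ ν T := by
      have hsub : B ∩ E N ⊆ ⋃ j, B ∩ A j := by
        rw [← inter_iUnion, hAunion]
      calc μ (B ∩ E N) ≤ μ (⋃ j, B ∩ A j) := measure_mono hsub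
        _ ≤ ∑ j, μ (B ∩ A j) := by
            exact measure_iUnion_fintype_le μ _
        _ ≤ ∑ j, c j * Measure.dirac (u ↑j) T := by
            apply Finset.sum_le_sum
            intro j _
            by_cases hx : (B ∩ A j).Nonempty
            · obtain ⟨x, hxB, hxA⟩ := hx
              have hmem : u j ∈ T := by
                rw [hT, Metric.mem_thickening_iff]
                refine ⟨x, hxB, ?_⟩
                have := hAball j hxA
                rw [mem_ball] at this
                rw [dist_comm]
                exact lt_trans this hrε
              rw [Measure.dirac_apply_of_mem hmem, mul_one]
              exact le_trans (measure_mono inter_subset_right) le_self_add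
            · rw [Set.not_nonempty_iff_eq_empty.mp hx]
              simp
        _ = ν T := (hνapp T hTmeas).symm
    calc μ B ≤ μ (B ∩ E N) + ENNReal.ofReal ε := step1
      _ ≤ ν T + ENNReal.ofReal ε := by gcongr
  calc levyProkhorovDist μ ν ≤ r := hbound
    _ < δ := by rw [hr]; linarith

lemma lp_unif_cont {S : Type*} [MeasurableSpace S] [MetricSpace S] [OpensMeasurableSpace S]
    (α : ℝ → Measure S) (hprob : ∀ t ∈ Set.Icc (0 : ℝ) 1, IsProbabilityMeasure (α t))
    (hcont : LPContinuousOn α (Set.Icc 0 1)) {ε : ℝ} (hε : 0 < ε) :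
    ∃ δ > 0, ∀ s ∈ Set.Icc (0:ℝ) 1, ∀ t ∈ Set.Icc (0:ℝ) 1, |s - t| < δ →
      levyProkhorovDist (α s) (α t) < ε := by
  have h2 : ∀ t : Icc (0:ℝ) 1, ∃ δ > 0, ∀ s ∈ Icc (0:ℝ) 1, |s - (t:ℝ)| < δ →
      levyProkhorovDist (α s) (α t) < ε/2 := fun t => hcont t t.2 (ε/2) (by positivity)
  choose δf hδf hP using h2
  have hcov : Icc (0:ℝ) 1 ⊆ ⋃ t : Icc (0:ℝ) 1, ball (t:ℝ) (δf t / 2) := by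
    intro x hx
    exact mem_iUnion.mpr ⟨⟨x, hx⟩, by simpa using half_pos (hδf ⟨x, hx⟩)⟩
  obtain ⟨F, hF⟩ := isCompact_Icc.elim_finite_subcover _ (fun t => isOpen_ball) hcov
  have hFne : F.Nonempty := by
    have := hF (left_mem_Icc.mpr zero_le_one)
    simp only [mem_iUnion] at this
    obtain ⟨i, hiF, _⟩ := this
    exact ⟨i, hiF⟩
  set δ := F.inf' hFne (fun t => δf t / 2) with hδdef
  have hδpos : 0 < δ := by
    rw [hδdef, Finset.lt_inf'_iff]
    exact fun t _ => half_pos (hδf t)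
  refine ⟨δ, hδpos, ?_⟩
  intro s hs t ht hst
  obtain ⟨i, hiF, hti⟩ : ∃ i ∈ F, t ∈ ball (i:ℝ) (δf i / 2) := by
    have := hF ht
    simp only [mem_iUnion] at this
    obtain ⟨i, hiF, h⟩ := this
    exact ⟨i, hiF, h⟩
  rw [mem_ball, Real.dist_eq] at hti
  have hδle : δ ≤ δf i / 2 := Finset.inf'_le _ hiF
  have hsi : |s - (i:ℝ)| < δf i := by
    calc |s - (i:ℝ)| ≤ |s - t| + |t - (i:ℝ)| := abs_sub_le s t i
      _ < δ + δf i / 2 := by gcongr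
      _ ≤ δf i / 2 + δf i / 2 := by gcongr
      _ = δf i := by ring
  have h1 := hP i s hs hsi
  have h2' := hP i t ht (by calc |t - (i:ℝ)| < δf i / 2 := hti
    _ ≤ δf i := by linarith [hδf i])
  haveI := hprob s hs
  haveI := hprob t ht
  haveI := hprob (i:ℝ) i.2
  calc levyProkhorovDist (α s) (α t)
      ≤ levyProkhorovDist (α s) (α i) + levyProkhorovDist (α i) (α t) :=
        levyProkhorovDist_triangle _ _ _
    _ < ε/2 + ε/2 := by
        apply add_lt_add h1
        rw [levyProkhorovDist_comm]
        exact h2'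
    _ = ε := by ring

theorem stmt9 {S : Type*} [MeasurableSpace S] [MetricSpace S] [BorelSpace S]
    [CompleteSpace S] [TopologicalSpace.SeparableSpace S]
    (α : ℝ → Measure S) (hprob : ∀ t ∈ Set.Icc (0 : ℝ) 1, IsProbabilityMeasure (α t))
    (hcont : LPContinuousOn α (Set.Icc 0 1)) {ε : ℝ} (hε : 0 < ε) :
    ∃ β : ℝ → Measure S,
      IsPolygonalWithVertices β {μ | FinitelySupported μ ∧ IsProbabilityMeasure μ} ∧
      ∀ t ∈ Set.Icc (0 : ℝ) 1, levyProkhorovDist (α t) (β t) < ε := by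
  obtain ⟨δ, hδpos, hunif⟩ := lp_unif_cont α hprob hcont (by positivity : 0 < ε/4)
  obtain ⟨n, hn⟩ := exists_nat_one_div_lt hδpos
  have hn1 : (0:ℝ) < (n:ℝ) + 1 := by positivity
  set tt : Fin (n + 2) → ℝ := fun i => (i : ℝ) / ((n:ℝ) + 1) with htt
  have httmem : ∀ i : Fin (n + 2), tt i ∈ Icc (0:ℝ) 1 := by
    intro i
    constructor
    · positivity
    · rw [div_le_one hn1]
      have : (i : ℕ) ≤ n + 1 := Nat.lt_succ_iff.mp i.isLt
      exact_mod_cast this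
  have hv : ∀ i : Fin (n + 2), ∃ ν : Measure S, FinitelySupported ν ∧ IsProbabilityMeasure ν ∧
      levyProkhorovDist (α (tt i)) ν < ε/4 := by
    intro i
    haveI := hprob (tt i) (httmem i)
    exact dense_finSupp (α (tt i)) (by positivity)
  choose ν hν1 hν2 hν3 using hv
  set idx : ℕ → Fin (n + 2) := fun m => ⟨min (n + 1) m, by omega⟩ with hidx
  have hidxval : ∀ m : ℕ, m ≤ n + 1 → ((idx m : ℕ)) = m := fun m hm => min_eq_right hm
  set K : ℝ → ℕ := fun s => min n ⌊s * ((n:ℝ) + 1)⌋₊ with hK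
  have hKn : ∀ s, K s ≤ n := fun s => min_le_left _ _
  set β : ℝ → Measure S := fun s =>
    ENNReal.ofReal ((((K s : ℝ) + 1) / ((n:ℝ) + 1) - s) * ((n:ℝ) + 1)) • ν (idx (K s))
    + ENNReal.ofReal ((s - (K s : ℝ) / ((n:ℝ) + 1)) * ((n:ℝ) + 1)) • ν (idx (K s + 1)) with hβ
  -- the key bounds on K
  have hKbound : ∀ s ∈ Icc (0:ℝ) 1, (K s : ℝ) / ((n:ℝ)+1) ≤ s ∧ s ≤ ((K s : ℝ) + 1) / ((n:ℝ)+1) := by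
    intro s hs
    have h0 : (0:ℝ) ≤ s * ((n:ℝ)+1) := mul_nonneg hs.1 hn1.le
    have hfl : (⌊s * ((n:ℝ)+1)⌋₊ : ℝ) ≤ s * ((n:ℝ)+1) := Nat.floor_le h0
    constructor
    · rw [div_le_iff₀ hn1]
      calc (K s : ℝ) ≤ (⌊s * ((n:ℝ)+1)⌋₊ : ℝ) := Nat.cast_le.mpr (min_le_right _ _)
        _ ≤ s * ((n:ℝ)+1) := hfl
    · rw [le_div_iff₀ hn1]
      by_cases hc : ⌊s * ((n:ℝ)+1)⌋₊ ≤ n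
      · have hKeq : K s = ⌊s * ((n:ℝ)+1)⌋₊ := min_eq_right hc
        rw [hKeq]
        exact (Nat.lt_floor_add_one _).le
      · have hKeq : K s = n := min_eq_left (by omega)
        rw [hKeq]
        calc s * ((n:ℝ)+1) ≤ 1 * ((n:ℝ)+1) := by gcongr; exact hs.2
          _ ≤ (n:ℝ) + 1 := by ring_nf; exact le_refl _
  -- the polygonal property
  have hpoly : ∀ (i : Fin (n + 1)), ∀ s ∈ Set.Icc (tt i.castSucc) (tt i.succ),
      β s = ENNReal.ofReal ((tt i.succ - s) / (tt i.succ - tt i.castSucc)) • ν i.castSucc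
        + ENNReal.ofReal ((s - tt i.castSucc) / (tt i.succ - tt i.castSucc)) • ν i.succ := by
    intro i s hs
    set m : ℕ := (i : ℕ) with hm
    have hmn : m ≤ n := Nat.lt_succ_iff.mp i.isLt
    have htcast : tt i.castSucc = (m:ℝ)/((n:ℝ)+1) := by
      rw [htt]; show ((i.castSucc : ℕ) : ℝ) / _ = _; rw [Fin.coe_castSucc]
    have htsucc : tt i.succ = ((m:ℝ)+1)/((n:ℝ)+1) := by
      rw [htt]; show ((i.succ : ℕ) : ℝ) / _ = _; rw [Fin.val_succ]; push_cast; ring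
    have hlo : (m:ℝ)/((n:ℝ)+1) ≤ s := htcast ▸ hs.1
    have hhi : s ≤ ((m:ℝ)+1)/((n:ℝ)+1) := htsucc ▸ hs.2
    have hs0 : (0:ℝ) ≤ s := le_trans (by positivity) hlo
    have hden : tt i.succ - tt i.castSucc = 1/((n:ℝ)+1) := by
      rw [htsucc, htcast]; field_simp; ring
    rw [hden, one_div, div_inv_eq_mul, div_inv_eq_mul, htsucc, htcast]
    by_cases hcase : s < ((m:ℝ)+1)/((n:ℝ)+1) ∨ m = n
    · have hge : m ≤ ⌊s * ((n:ℝ)+1)⌋₊ := Nat.le_floor (by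
        rw [← div_le_iff₀ hn1] at *
        exact hlo)
      have hKm : K s = m := by
        rcases hcase with h | h
        · have hlt : ⌊s * ((n:ℝ)+1)⌋₊ < m + 1 := by
            rw [Nat.floor_lt (mul_nonneg hs0 hn1.le)]
            push_cast
            calc s * ((n:ℝ)+1) < (((m:ℝ)+1)/((n:ℝ)+1)) * ((n:ℝ)+1) :=
                mul_lt_mul_of_pos_right h hn1
              _ = (m:ℝ)+1 := by field_simp
          have hfe : ⌊s * ((n:ℝ)+1)⌋₊ = m := by omega
          show min n ⌊s * ((n:ℝ)+1)⌋₊ = m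
          rw [hfe]
          exact min_eq_right hmn
        · show min n ⌊s * ((n:ℝ)+1)⌋₊ = m
          rw [← h] at hge ⊢
          exact min_eq_left hge
      have hi1 : idx m = i.castSucc := by
        apply Fin.ext
        show min (n+1) m = (i.castSucc : ℕ)
        rw [Fin.coe_castSucc, ← hm]
        exact min_eq_right (by omega)
      have hi2 : idx (m+1) = i.succ := by
        apply Fin.ext
        show min (n+1) (m+1) = (i.succ : ℕ)
        rw [Fin.val_succ, ← hm]
        exact min_eq_right (by omega)
      simp only [hβ]
      rw [hKm, hi1, hi2]
    · push_neg at hcase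
      have hseq : s = ((m:ℝ)+1)/((n:ℝ)+1) := le_antisymm hhi hcase.1
      have hmlt : m < n := lt_of_le_of_ne hmn hcase.2
      have hKm : K s = m + 1 := by
        have hmul : s * ((n:ℝ)+1) = ((m+1:ℕ):ℝ) := by rw [hseq]; push_cast; field_simp
        show min n ⌊s * ((n:ℝ)+1)⌋₊ = m + 1
        rw [hmul, Nat.floor_natCast]
        exact min_eq_right (by omega)
      have hi1 : idx (m+1) = i.succ := by
        apply Fin.ext
        show min (n+1) (m+1) = (i.succ : ℕ)
        rw [Fin.val_succ, ← hm]
        exact min_eq_right (by omega)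
      have c1 : ((((m+1:ℕ):ℝ)+1)/((n:ℝ)+1) - s) * ((n:ℝ)+1) = 1 := by
        rw [hseq]; push_cast; field_simp; ring
      have c2 : (s - ((m+1:ℕ):ℝ)/((n:ℝ)+1)) * ((n:ℝ)+1) = 0 := by
        rw [hseq]; push_cast; ring
      have c3 : (((m:ℝ)+1)/((n:ℝ)+1) - s) * ((n:ℝ)+1) = 0 := by
        rw [hseq]; ring
      have c4 : (s - (m:ℝ)/((n:ℝ)+1)) * ((n:ℝ)+1) = 1 := by
        rw [hseq]; field_simp; ring
      simp only [hβ]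
      rw [hKm, hi1, c1, c2, c3, c4]
      simp
  refine ⟨β, ⟨n, tt, ν, ?_, ?_, ?_, fun i => ⟨hν1 i, hν2 i⟩, hpoly⟩, ?_⟩
  · intro i j hij
    show (i : ℝ) / ((n:ℝ)+1) < (j : ℝ) / ((n:ℝ)+1)
    gcongr
    exact Nat.cast_lt.mpr hij
  · simp [htt]
  · rw [htt]
    simp only [Fin.val_last]
    push_cast
    field_simp
  · -- approximation bound
    intro s hs
    obtain ⟨hlo, hhi⟩ := hKbound s hs
    have hK1 : K s + 1 ≤ n + 1 := by have := hKn s; omega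
    have e1 : ((idx (K s) : ℕ) : ℝ) = (K s : ℝ) := by
      rw [hidxval _ (by have := hKn s; omega)]
    have e2 : ((idx (K s + 1) : ℕ) : ℝ) = (K s : ℝ) + 1 := by
      rw [hidxval _ hK1]; push_cast; ring
    have hd1 : |s - tt (idx (K s))| < δ := by
      rw [htt]
      show |s - ((idx (K s) : ℕ) : ℝ) / ((n:ℝ)+1)| < δ
      rw [e1, abs_sub_lt_iff]
      constructor
      · calc s - (K s : ℝ) / ((n:ℝ)+1) ≤ ((K s : ℝ)+1)/((n:ℝ)+1) - (K s : ℝ)/((n:ℝ)+1) := by linarith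
          _ = 1 / ((n:ℝ)+1) := by field_simp; ring
          _ < δ := by exact_mod_cast hn
      · calc (K s : ℝ) / ((n:ℝ)+1) - s ≤ 0 := by linarith
          _ < δ := hδpos
    have hd2 : |s - tt (idx (K s + 1))| < δ := by
      rw [htt]
      show |s - ((idx (K s + 1) : ℕ) : ℝ) / ((n:ℝ)+1)| < δ
      rw [e2, abs_sub_lt_iff]
      constructor
      · calc s - ((K s : ℝ)+1) / ((n:ℝ)+1) ≤ 0 := by linarith
          _ < δ := hδpos
      · calc ((K s : ℝ)+1) / ((n:ℝ)+1) - s ≤ ((K s : ℝ)+1)/((n:ℝ)+1) - (K s : ℝ)/((n:ℝ)+1) := by linarith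
          _ = 1 / ((n:ℝ)+1) := by field_simp; ring
          _ < δ := by exact_mod_cast hn
    haveI := hprob s hs
    haveI := fun i => hν2 i
    have hbnd : ∀ m : Fin (n+2), |s - tt m| < δ → levyProkhorovDist (α s) (ν m) < ε/2 := by
      intro m hm
      haveI := hprob (tt m) (httmem m)
      calc levyProkhorovDist (α s) (ν m)
          ≤ levyProkhorovDist (α s) (α (tt m)) + levyProkhorovDist (α (tt m)) (ν m) :=
            levyProkhorovDist_triangle _ _ _
        _ < ε/4 + ε/4 := add_lt_add (hunif s hs (tt m) (httmem m) hm) (hν3 m)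
        _ = ε/2 := by ring
    have ha : (0:ℝ) ≤ (((K s : ℝ) + 1) / ((n:ℝ) + 1) - s) * ((n:ℝ) + 1) := by
      apply mul_nonneg _ hn1.le; linarith
    have hb : (0:ℝ) ≤ (s - (K s : ℝ) / ((n:ℝ) + 1)) * ((n:ℝ) + 1) := by
      apply mul_nonneg _ hn1.le; linarith
    have hab : (((K s : ℝ) + 1) / ((n:ℝ) + 1) - s) * ((n:ℝ) + 1)
        + (s - (K s : ℝ) / ((n:ℝ) + 1)) * ((n:ℝ) + 1) = 1 := by
      field_simp
      ring
    calc levyProkhorovDist (α s) (β s)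
        ≤ max (levyProkhorovDist (α s) (ν (idx (K s))))
            (levyProkhorovDist (α s) (ν (idx (K s + 1)))) := lp_mix_le _ _ _ ha hb hab
      _ < ε := by
          apply max_lt
          · calc levyProkhorovDist (α s) (ν (idx (K s))) < ε/2 := hbnd _ hd1
              _ < ε := by linarith
          · calc levyProkhorovDist (α s) (ν (idx (K s + 1))) < ε/2 := hbnd _ hd2
              _ < ε := by linarith
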